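/- In G = ℤ² ⋊ ℤ/2ℤ (swap action) with a = ((1,0),0), t = ((0,0),1), for x₁, x₂, y ≥ 0 the word length of the element represented by a^{x₁} t a^{y} t a^{x₂} equals x₁ + x₂ + y + 2 when y > 0; in particular each such word with x₁, x₂ ≥ 0 and y > 0 is geodesic, giving x₁ + x₂ + 1 distinct geodesic words over {a±1, t±1} representing the element ((x₁+x₂, y), 0). -/

import Mathlib

/-- The coordinate-swapping automorphism of ℤ². -/
def swapAut : MulAut (Multiplicative (ℤ × ℤ)) :=
  AddEquiv.toMultiplicative (AddEquiv.prodComm : (ℤ × ℤ) ≃+ (ℤ × ℤ))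

lemma swapAut_sq : swapAut ^ 2 = 1 := by
  refine MulEquiv.ext (fun z => ?_)
  show swapAut (swapAut z) = z
  cases z
  rfl

/-- The action of ℤ/2ℤ on ℤ² by swapping the two coordinates. -/
def swapAction : Multiplicative (ZMod 2) →* MulAut (Multiplicative (ℤ × ℤ)) where
  toFun ε := swapAut ^ (Multiplicative.toAdd ε).val
  map_one' := rfl
  map_mul' x y := by
    show swapAut ^ _ = swapAut ^ _ * swapAut ^ _
    rw [← pow_add]
    have key : ∀ m n : ℕ, m % 2 = n % 2 → swapAut ^ m = swapAut ^ n := by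
      intro m n h
      rw [← Nat.div_add_mod m 2, ← Nat.div_add_mod n 2, h, pow_add, pow_add,
        pow_mul, pow_mul, swapAut_sq]
      simp
    apply key
    have := ZMod.val_add (Multiplicative.toAdd x) (Multiplicative.toAdd y)
    simp only [toAdd_mul] at *
    omega

/-- The group G = ℤ² ⋊ ℤ/2ℤ with the swap action. -/
abbrev GG := SemidirectProduct (Multiplicative (ℤ × ℤ)) (Multiplicative (ZMod 2)) swapAction

/-- The generator a = ((1,0), 0). -/
def ga : GG := SemidirectProduct.inl (Multiplicative.ofAdd ((1, 0) : ℤ × ℤ))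

/-- The generator t = ((0,0), 1). -/
def gt : GG := SemidirectProduct.inr (Multiplicative.ofAdd (1 : ZMod 2))

/-- The element ((x,y), ε) of G. -/
def el (x y : ℤ) (ε : ZMod 2) : GG :=
  ⟨Multiplicative.ofAdd (x, y), Multiplicative.ofAdd ε⟩

/-- The generating set A = {a, a⁻¹, t, t⁻¹}. -/
def GenSet : Set GG := {ga, ga⁻¹, gt, gt⁻¹}

/-- `w` is a word over the alphabet A. -/
def IsWord (w : List GG) : Prop := ∀ x ∈ w, x ∈ GenSet

/-- `w` is a word over A representing the group element `g` (via its product). -/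
def Represents (w : List GG) (g : GG) : Prop := IsWord w ∧ w.prod = g

/-- The word length of `g`: minimal length of a word over A representing `g`. -/
noncomputable def wordLength (g : GG) : ℕ :=
  sInf {n | ∃ w : List GG, Represents w g ∧ w.length = n}

/-- A word over A is geodesic if no strictly shorter word over A represents
the same element. -/
def IsGeodesic (w : List GG) : Prop :=
  IsWord w ∧ ∀ v : List GG, IsWord v → v.prod = w.prod → w.length ≤ v.length

open Classical in
/-- The number of t-letters of a word (occurrences of t and t⁻¹). -/
noncomputable def tCount (w : List GG) : ℕ :=
  w.countP (fun x => decide (x = gt ∨ x = gt⁻¹))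

/-- The word aˣ over A: x letters `a` if x ≥ 0, |x| letters `a⁻¹` if x < 0. -/
def apow (x : ℤ) : List GG :=
  if 0 ≤ x then List.replicate x.toNat ga else List.replicate (-x).toNat ga⁻¹

/-- The word metric on G with respect to A. -/
noncomputable def dA (g h : GG) : ℕ := wordLength (g⁻¹ * h)

/-- The point of G reached at time i along the word w (the endpoint if i
exceeds the length of w). -/
def pt (w : List GG) (i : ℕ) : GG := (w.take i).prod

/-- Words u and w synchronously k-fellow travel. -/
def FellowTravels (k : ℕ) (u w : List GG) : Prop :=
  ∀ i : ℕ, dA (pt u i) (pt w i) ≤ k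

set_option maxHeartbeats 1000000

lemma gt_inv : gt⁻¹ = gt := by
  show (SemidirectProduct.inr _)⁻¹ = _
  rw [← map_inv]
  congr 1

lemma el_eq_iff {u v u' v' : ℤ} {ε ε' : ZMod 2} :
    el u v ε = el u' v' ε' ↔ (u = u' ∧ v = v' ∧ ε = ε') := by
  constructor
  · intro h
    have h1 := congrArg SemidirectProduct.left h
    have h2 := congrArg SemidirectProduct.right h
    simp only [el] at h1 h2
    have := Multiplicative.ofAdd.injective h1
    have := Multiplicative.ofAdd.injective h2
    simp_all [Prod.ext_iff]
  · rintro ⟨rfl, rfl, rfl⟩; rfl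

lemma el_zero_mul (u v u' v' : ℤ) (ε' : ZMod 2) :
    el u v 0 * el u' v' ε' = el (u + u') (v + v') ε' := by
  refine SemidirectProduct.ext ?_ ?_
  · show Multiplicative.ofAdd (u,v) * swapAction (Multiplicative.ofAdd (0 : ZMod 2)) (Multiplicative.ofAdd (u',v')) = Multiplicative.ofAdd (u+u', v+v')
    have : swapAction (Multiplicative.ofAdd (0 : ZMod 2)) = 1 := by
      show swapAut ^ _ = 1
      norm_num
    rw [this]
    simp [← ofAdd_add, Prod.ext_iff]
  · show Multiplicative.ofAdd (0 : ZMod 2) * Multiplicative.ofAdd ε' = Multiplicative.ofAdd ε'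
    simp

lemma el_one_mul (u v u' v' : ℤ) (ε' : ZMod 2) :
    el u v 1 * el u' v' ε' = el (u + v') (v + u') (1 + ε') := by
  refine SemidirectProduct.ext ?_ ?_
  · show Multiplicative.ofAdd (u,v) * swapAction (Multiplicative.ofAdd (1 : ZMod 2)) (Multiplicative.ofAdd (u',v')) = Multiplicative.ofAdd (u+v', v+u')
    have : swapAction (Multiplicative.ofAdd (1 : ZMod 2)) = swapAut := by
      show swapAut ^ _ = swapAut
      norm_num [ZMod.val_one]
    rw [this]
    show Multiplicative.ofAdd (u,v) * Multiplicative.ofAdd (v', u') = _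
    simp [← ofAdd_add, Prod.ext_iff]
  · rfl

lemma ga_el : ga = el 1 0 0 := rfl
lemma gt_el : gt = el 0 0 1 := rfl
lemma ga_inv_el : ga⁻¹ = el (-1) 0 0 := by
  show (SemidirectProduct.inl _)⁻¹ = _
  rw [← map_inv]
  rfl

lemma exists_el (g : GG) : ∃ u v ε, g = el u v ε :=
  ⟨(Multiplicative.toAdd g.left).1, (Multiplicative.toAdd g.left).2, Multiplicative.toAdd g.right, rfl⟩

lemma ga_mul (u v : ℤ) (ε : ZMod 2) : ga * el u v ε = el (1 + u) v ε := by
  rw [ga_el, el_zero_mul]; norm_num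
lemma ga_inv_mul (u v : ℤ) (ε : ZMod 2) : ga⁻¹ * el u v ε = el (u - 1) v ε := by
  rw [ga_inv_el, el_zero_mul]; ring_nf
lemma gt_mul (u v : ℤ) (ε : ZMod 2) : gt * el u v ε = el v u (1 + ε) := by
  rw [gt_el, el_one_mul]; norm_num

lemma ga_ne_gt : ga ≠ gt := by
  intro h
  have := (el_eq_iff.mp h).1
  norm_num at this
lemma ga_inv_ne_gt : ga⁻¹ ≠ gt := by
  rw [ga_inv_el, gt_el]
  intro h
  have := (el_eq_iff.mp h).1
  norm_num at this

lemma tCount_cons (g : GG) (w : List GG) :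
    tCount (g :: w) = tCount [g] + tCount w := by
  classical
  simp only [tCount, List.countP_cons, List.countP_nil]
  omega

lemma tCount_gt : tCount [gt] = 1 := by
  classical
  simp [tCount]

lemma tCount_ga : tCount [ga] = 0 := by
  classical
  simp [tCount, gt_inv, ga_ne_gt]

lemma tCount_ga_inv : tCount [ga⁻¹] = 0 := by
  classical
  simp [tCount, gt_inv, ga_inv_ne_gt]

lemma one_el : (1 : GG) = el 0 0 0 := rfl

lemma replicate_ga_prod (n : ℕ) : (List.replicate n ga).prod = el n 0 0 := by
  induction n with
  | zero => simp [one_el]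
  | succ n ih =>
      rw [List.replicate_succ, List.prod_cons, ih, ga_mul]
      congr 1
      push_cast; ring

lemma replicate_ga_inv_prod (n : ℕ) : (List.replicate n ga⁻¹).prod = el (-n) 0 0 := by
  induction n with
  | zero => simp [one_el]
  | succ n ih =>
      rw [List.replicate_succ, List.prod_cons, ih, ga_inv_mul]
      congr 1
      push_cast; ring

lemma apow_prod (x : ℤ) : (apow x).prod = el x 0 0 := by
  unfold apow
  split
  · rw [replicate_ga_prod]; congr 1; omega
  · rw [replicate_ga_inv_prod]; congr 1; omega

lemma apow_length_nonneg {x : ℤ} (hx : 0 ≤ x) : (apow x).length = x.toNat := by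
  unfold apow; rw [if_pos hx, List.length_replicate]

lemma apow_isword (x : ℤ) : IsWord (apow x) := by
  unfold apow
  split <;> intro g hg <;> rw [List.eq_of_mem_replicate hg] <;> simp [GenSet]

lemma apow_tCount (x : ℤ) : tCount (apow x) = 0 := by
  classical
  unfold apow tCount
  split <;> rw [List.countP_eq_zero] <;> intro g hg <;> rw [List.eq_of_mem_replicate hg] <;>
    simp [gt_inv, ga_ne_gt, ga_inv_ne_gt]

lemma mem_genset {g : GG} (h : g ∈ GenSet) : g = ga ∨ g = ga⁻¹ ∨ g = gt := by
  simp only [GenSet, Set.mem_insert_iff, Set.mem_singleton_iff, gt_inv] at h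
  tauto

lemma key (w : List GG) (hw : IsWord w) : ∀ u v : ℤ, ∀ ε : ZMod 2, w.prod = el u v ε →
    u.natAbs + v.natAbs + tCount w ≤ w.length ∧ ((tCount w : ZMod 2) = ε) ∧
    (tCount w = 0 → v = 0) := by
  induction w with
  | nil =>
      intro u v ε hp
      rw [List.prod_nil, one_el] at hp
      obtain ⟨rfl, rfl, rfl⟩ := el_eq_iff.mp hp.symm
      simp [tCount]
  | cons g rest ih =>
      intro u v ε hp
      have hg : g ∈ GenSet := hw g List.mem_cons_self
      have hrest : IsWord rest := fun x hx => hw x (List.mem_cons_of_mem g hx)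
      obtain ⟨u', v', ε', he⟩ := exists_el rest.prod
      obtain ⟨h1, h2, h3⟩ := ih hrest u' v' ε' he
      rw [List.prod_cons, he] at hp
      rw [tCount_cons]
      rcases mem_genset hg with rfl | rfl | rfl
      · rw [ga_mul] at hp
        obtain ⟨hu, hv, hε⟩ := el_eq_iff.mp hp.symm
        rw [tCount_ga, hε, hv]
        refine ⟨?_, by simpa using h2, fun h => h3 (by omega)⟩
        simp only [List.length_cons]
        omega
      · rw [ga_inv_mul] at hp
        obtain ⟨hu, hv, hε⟩ := el_eq_iff.mp hp.symm
        rw [tCount_ga_inv, hε, hv]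
        refine ⟨?_, by simpa using h2, fun h => h3 (by omega)⟩
        simp only [List.length_cons]
        omega
      · rw [gt_mul] at hp
        obtain ⟨hu, hv, hε⟩ := el_eq_iff.mp hp.symm
        rw [tCount_gt, hε]
        refine ⟨?_, ?_, ?_⟩
        · simp only [List.length_cons]; omega
        · push_cast
          rw [h2]
        · omega

lemma cast_zero_even {n : ℕ} (h : (n : ZMod 2) = 0) : n % 2 = 0 := by
  have hm : ((n % 2 : ℕ) : ZMod 2) = (n : ZMod 2) := ZMod.natCast_mod n 2
  rcases Nat.mod_two_eq_zero_or_one n with h2 | h2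
  · exact h2
  · rw [h2, h] at hm
    norm_num at hm

lemma cast_one_odd {n : ℕ} (h : (n : ZMod 2) = 1) : n % 2 = 1 := by
  have hm : ((n % 2 : ℕ) : ZMod 2) = (n : ZMod 2) := ZMod.natCast_mod n 2
  rcases Nat.mod_two_eq_zero_or_one n with h2 | h2
  · rw [h2, h] at hm
    norm_num at hm
  · exact h2

/-- Lower bound for elements of the bottom layer with v ≠ 0. -/
lemma lowerBound {w : List GG} (hw : IsWord w) {u v : ℤ} (hv : v ≠ 0)
    (hp : w.prod = el u v 0) : u.natAbs + v.natAbs + 2 ≤ w.length := by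
  obtain ⟨h1, h2, h3⟩ := key w hw u v 0 hp
  have ht0 : tCount w ≠ 0 := fun h => hv (h3 h)
  have := cast_zero_even h2
  omega

lemma isword_append {u v : List GG} (hu : IsWord u) (hv : IsWord v) : IsWord (u ++ v) := by
  intro x hx
  rcases List.mem_append.mp hx with h | h
  exacts [hu x h, hv x h]

lemma isword_gt : IsWord [gt] := by
  intro x hx
  simp only [List.mem_singleton] at hx
  simp [hx, GenSet]

/-- Product of the standard word. -/
lemma W_prod (s y r : ℤ) :
    (apow s ++ [gt] ++ apow y ++ [gt] ++ apow r).prod = el (s + r) y 0 := by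
  simp only [List.prod_append, List.prod_cons, List.prod_nil, mul_one]
  rw [apow_prod, apow_prod, apow_prod]
  simp only [mul_assoc]
  have e1 : gt * el r 0 0 = el 0 r 1 := by rw [gt_mul]; norm_num
  have e2 : el y 0 0 * el 0 r 1 = el y r 1 := by rw [el_zero_mul]; norm_num
  have e3 : gt * el y r 1 = el r y 0 := by
    rw [gt_mul, el_eq_iff]
    exact ⟨rfl, rfl, by decide⟩
  calc el s 0 0 * (gt * (el y 0 0 * (gt * el r 0 0)))
      = el s 0 0 * (gt * (el y 0 0 * el 0 r 1)) := by rw [e1]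
    _ = el s 0 0 * (gt * el y r 1) := by rw [e2]
    _ = el s 0 0 * el r y 0 := by rw [e3]
    _ = el (s + r) y 0 := by rw [el_zero_mul]; norm_num

lemma W_isword (s y r : ℤ) : IsWord (apow s ++ [gt] ++ apow y ++ [gt] ++ apow r) :=
  isword_append (isword_append (isword_append (isword_append (apow_isword s) isword_gt)
    (apow_isword y)) isword_gt) (apow_isword r)

lemma W_length {s y r : ℤ} (hs : 0 ≤ s) (hy : 0 ≤ y) (hr : 0 ≤ r) :
    (apow s ++ [gt] ++ apow y ++ [gt] ++ apow r).length = s.toNat + y.toNat + r.toNat + 2 := by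
  simp only [List.length_append, List.length_singleton,
    apow_length_nonneg hs, apow_length_nonneg hy, apow_length_nonneg hr]
  omega

/-- The word length of ((u,v),0) for u ≥ 0, v > 0. -/
lemma wordLength_el {u v : ℤ} (hu : 0 ≤ u) (hv : 0 < v) :
    wordLength (el u v 0) = u.toNat + v.toNat + 2 := by
  have hmem : u.toNat + v.toNat + 2 ∈ {n | ∃ w : List GG, Represents w (el u v 0) ∧ w.length = n} := by
    refine ⟨apow u ++ [gt] ++ apow v ++ [gt] ++ apow 0, ⟨⟨W_isword u v 0, ?_⟩, ?_⟩⟩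
    · rw [W_prod]; norm_num
    · rw [W_length hu hv.le le_rfl]; norm_num
  refine le_antisymm (Nat.sInf_le hmem) (le_csInf ⟨_, hmem⟩ ?_)
  rintro n ⟨w, ⟨hw, hp⟩, rfl⟩
  have := lowerBound hw (by omega : v ≠ 0) hp
  omega

lemma apow_zero : apow 0 = [] := by simp [apow]

lemma ga_cons_apow {x : ℤ} (hx : 0 ≤ x) : ga :: apow x = apow (x + 1) := by
  unfold apow
  rw [if_pos hx, if_pos (by omega : (0:ℤ) ≤ x + 1)]
  have : (x + 1).toNat = x.toNat + 1 := by omega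
  rw [this, List.replicate_succ]

/-- Structure lemma, stage 0 : geodesic words for (q,0,ε=0), tCount forced 0. -/
lemma L0 : ∀ w : List GG, IsWord w → ∀ q : ℤ, 0 ≤ q → w.prod = el q 0 0 →
    w.length = q.toNat → w = apow q := by
  intro w
  induction w with
  | nil =>
      intro _ q _ _ hl
      simp only [List.length_nil] at hl
      have : q = 0 := by omega
      rw [this, apow_zero]
  | cons g rest ih =>
      intro hw q hq hp hl
      have hg : g ∈ GenSet := hw g List.mem_cons_self
      have hrest : IsWord rest := fun x hx => hw x (List.mem_cons_of_mem g hx)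
      obtain ⟨u', v', ε', he⟩ := exists_el rest.prod
      rw [List.prod_cons, he] at hp
      simp only [List.length_cons] at hl
      have hq1 : 1 ≤ q := by omega
      rcases mem_genset hg with rfl | rfl | rfl
      · rw [ga_mul] at hp
        obtain ⟨hu, hv, hε⟩ := el_eq_iff.mp hp.symm
        have he' : rest.prod = el (q - 1) 0 0 := by
          rw [he, el_eq_iff]; exact ⟨by omega, hv.symm, hε.symm⟩
        have := ih hrest (q - 1) (by omega) he' (by omega)
        rw [this, ga_cons_apow (by omega)]
        congr 1
        omega
      · rw [ga_inv_mul] at hp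
        obtain ⟨hu, hv, hε⟩ := el_eq_iff.mp hp.symm
        have he' : rest.prod = el (q + 1) 0 0 := by
          rw [he, el_eq_iff]; exact ⟨by omega, hv.symm, hε.symm⟩
        have := (key rest hrest _ _ _ he').1
        omega
      · rw [gt_mul] at hp
        obtain ⟨hu, hv, hε⟩ := el_eq_iff.mp hp.symm
        have hε' : ε' = 1 := by
          have h0 : (0 : ZMod 2) - 1 = ε' := by rw [hε]; ring
          rw [← h0]; decide
        have he' : rest.prod = el 0 q 1 := by rw [he, ← hv, ← hu, hε']
        obtain ⟨k1, k2, k3⟩ := key rest hrest _ _ _ he'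
        have := cast_one_odd k2
        omega

/-- Structure lemma, stage 1 : geodesic words for (p,q,1) are a^p t a^q. -/
lemma L1 : ∀ w : List GG, IsWord w → ∀ p q : ℤ, 0 ≤ p → 0 ≤ q → w.prod = el p q 1 →
    w.length = p.toNat + q.toNat + 1 → w = apow p ++ [gt] ++ apow q := by
  intro w
  induction w with
  | nil =>
      intro _ p q hp0 hq0 _ hl
      simp only [List.length_nil] at hl
      omega
  | cons g rest ih =>
      intro hw p q hp0 hq0 hp hl
      have hg : g ∈ GenSet := hw g List.mem_cons_self
      have hrest : IsWord rest := fun x hx => hw x (List.mem_cons_of_mem g hx)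
      obtain ⟨u', v', ε', he⟩ := exists_el rest.prod
      rw [List.prod_cons, he] at hp
      simp only [List.length_cons] at hl
      rcases mem_genset hg with rfl | rfl | rfl
      · rw [ga_mul] at hp
        obtain ⟨hu, hv, hε⟩ := el_eq_iff.mp hp.symm
        have he' : rest.prod = el (p - 1) q 1 := by
          rw [he, el_eq_iff]; exact ⟨by omega, hv.symm, hε.symm⟩
        by_cases hp1 : 1 ≤ p
        · have hres := ih hrest (p - 1) q (by omega) hq0 he' (by omega)
          have hcons : ga :: apow (p - 1) = apow p := by
            rw [ga_cons_apow (by omega)]; congr 1; omega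
          rw [hres]
          simp only [← List.cons_append]
          rw [hcons]
        · obtain ⟨k1, k2, k3⟩ := key rest hrest _ _ _ he'
          have := cast_one_odd k2
          omega
      · rw [ga_inv_mul] at hp
        obtain ⟨hu, hv, hε⟩ := el_eq_iff.mp hp.symm
        have he' : rest.prod = el (p + 1) q 1 := by
          rw [he, el_eq_iff]; exact ⟨by omega, hv.symm, hε.symm⟩
        have := (key rest hrest _ _ _ he').1
        omega
      · rw [gt_mul] at hp
        obtain ⟨hu, hv, hε⟩ := el_eq_iff.mp hp.symm
        have hε' : ε' = 0 := add_left_cancel (a := (1 : ZMod 2)) (by rw [add_zero, ← hε])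
        have he' : rest.prod = el q p 0 := by rw [he, ← hv, ← hu, hε']
        by_cases hp1 : 1 ≤ p
        · obtain ⟨k1, k2, k3⟩ := key rest hrest _ _ _ he'
          have ht : tCount rest ≠ 0 := fun h => by have := k3 h; omega
          have := cast_zero_even k2
          omega
        · have hpz : p = 0 := by omega
          subst hpz
          have he'' : rest.prod = el q 0 0 := he'
          have hres := L0 rest hrest q hq0 he'' (by omega)
          rw [hres, apow_zero]
          rfl

/-- Structure lemma, stage 2 : geodesic words for (u,v,0), v > 0. -/
lemma L2 : ∀ w : List GG, IsWord w → ∀ u v : ℤ, 0 ≤ u → 0 < v → w.prod = el u v 0 →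
    w.length = u.toNat + v.toNat + 2 →
    ∃ s : ℤ, 0 ≤ s ∧ s ≤ u ∧ w = apow s ++ [gt] ++ apow v ++ [gt] ++ apow (u - s) := by
  intro w
  induction w with
  | nil =>
      intro _ u v hu0 hv0 _ hl
      simp only [List.length_nil] at hl
      omega
  | cons g rest ih =>
      intro hw u v hu0 hv0 hp hl
      have hg : g ∈ GenSet := hw g List.mem_cons_self
      have hrest : IsWord rest := fun x hx => hw x (List.mem_cons_of_mem g hx)
      obtain ⟨u', v', ε', he⟩ := exists_el rest.prod
      rw [List.prod_cons, he] at hp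
      simp only [List.length_cons] at hl
      rcases mem_genset hg with rfl | rfl | rfl
      · rw [ga_mul] at hp
        obtain ⟨hu, hv, hε⟩ := el_eq_iff.mp hp.symm
        have he' : rest.prod = el (u - 1) v 0 := by
          rw [he, el_eq_iff]; exact ⟨by omega, hv.symm, hε.symm⟩
        by_cases hu1 : 1 ≤ u
        · obtain ⟨s, hs0, hsu, hres⟩ := ih hrest (u - 1) v (by omega) hv0 he' (by omega)
          refine ⟨s + 1, by omega, by omega, ?_⟩
          rw [hres, show u - 1 - s = u - (s + 1) from by omega]
          simp only [← List.cons_append]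
          rw [ga_cons_apow hs0]
        · have := lowerBound hrest (by omega : v ≠ 0) he'
          omega
      · rw [ga_inv_mul] at hp
        obtain ⟨hu, hv, hε⟩ := el_eq_iff.mp hp.symm
        have he' : rest.prod = el (u + 1) v 0 := by
          rw [he, el_eq_iff]; exact ⟨by omega, hv.symm, hε.symm⟩
        have := lowerBound hrest (by omega : v ≠ 0) he'
        omega
      · rw [gt_mul] at hp
        obtain ⟨hu, hv, hε⟩ := el_eq_iff.mp hp.symm
        have hε' : ε' = 1 := by
          have h0 : (0 : ZMod 2) - 1 = ε' := by rw [hε]; ring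
          rw [← h0]; decide
        have he' : rest.prod = el v u 1 := by rw [he, ← hv, ← hu, hε']
        have hres := L1 rest hrest v u hv0.le hu0 he' (by omega)
        refine ⟨0, le_rfl, hu0, ?_⟩
        rw [hres, apow_zero, sub_zero]
        rfl

lemma apow_natCast (n : ℕ) : apow (n : ℤ) = List.replicate n ga := by
  unfold apow
  rw [if_pos (by positivity), Int.toNat_natCast]

lemma gt_ne_ga : gt ≠ ga := fun h => ga_ne_gt h.symm

lemma lead_inj : ∀ (n m : ℕ) (r r' : List GG),
    List.replicate n ga ++ (gt :: r) = List.replicate m ga ++ (gt :: r') → n = m := by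
  intro n
  induction n with
  | zero =>
      intro m r r' h
      cases m with
      | zero => rfl
      | succ k =>
          rw [List.replicate_succ] at h
          simp only [List.replicate_zero, List.nil_append, List.cons_append, List.cons.injEq] at h
          exact absurd h.1 gt_ne_ga
  | succ k ih =>
      intro m r r' h
      cases m with
      | zero =>
          rw [List.replicate_succ] at h
          simp only [List.replicate_zero, List.nil_append, List.cons_append, List.cons.injEq] at h
          exact absurd h.1 ga_ne_gt
      | succ l =>
          rw [List.replicate_succ, List.replicate_succ] at h
          simp only [List.cons_append, List.cons.injEq] at h
          exact congrArg Nat.succ (ih l r r' h.2)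

theorem bottom_layer_geodesics' (x₁ x₂ y : ℤ) (h₁ : 0 ≤ x₁) (h₂ : 0 ≤ x₂) (hy : 0 < y) :
    (apow x₁ ++ [gt] ++ apow y ++ [gt] ++ apow x₂).prod = el (x₁ + x₂) y 0 ∧
    wordLength (el (x₁ + x₂) y 0) = (x₁ + x₂ + y).toNat + 2 ∧
    IsGeodesic (apow x₁ ++ [gt] ++ apow y ++ [gt] ++ apow x₂) ∧
    {w : List GG | IsGeodesic w ∧ w.prod = el (x₁ + x₂) y 0}.ncard
      = (x₁ + x₂).toNat + 1 := by
  classical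
  set U : ℤ := x₁ + x₂ with hU
  have hU0 : 0 ≤ U := by omega
  refine ⟨W_prod x₁ y x₂, ?_, ?_, ?_⟩
  · rw [wordLength_el hU0 hy]
    omega
  · refine ⟨W_isword x₁ y x₂, ?_⟩
    intro v hv hp
    rw [W_prod] at hp
    have := lowerBound hv (by omega : y ≠ 0) hp
    rw [W_length h₁ hy.le h₂]
    omega
  · set f : ℕ → List GG := fun n => apow (n : ℤ) ++ [gt] ++ apow y ++ [gt] ++ apow (U - n)
      with hf
    have hflen : ∀ n : ℕ, n ≤ U.toNat → (f n).length = U.toNat + y.toNat + 2 := by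
      intro n hn
      rw [hf]
      rw [W_length (by positivity) hy.le (by omega)]
      omega
    have hfprod : ∀ n : ℕ, (f n).prod = el (U - n + n) y 0 := fun n => by
      rw [hf]
      have := W_prod (n : ℤ) y (U - n)
      rw [this, el_eq_iff]
      exact ⟨by ring, rfl, rfl⟩
    have hset : {w : List GG | IsGeodesic w ∧ w.prod = el U y 0}
        = ↑((Finset.range (U.toNat + 1)).image f) := by
      ext w
      simp only [Set.mem_setOf_eq, Finset.coe_image, Set.mem_image, Finset.mem_coe,
        Finset.mem_range]
      constructor
      · rintro ⟨⟨hw, hmin⟩, hprod⟩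
        have hle : w.length ≤ U.toNat + y.toNat + 2 := by
          have h0 : (f 0).prod = w.prod := by
            rw [hfprod 0, hprod, el_eq_iff]
            exact ⟨by push_cast; ring, rfl, rfl⟩
          have := hmin (f 0) (W_isword _ _ _) h0
          rw [hflen 0 (by omega)] at this
          exact this
        have hge := lowerBound hw (by omega : y ≠ 0) hprod
        have hlen : w.length = U.toNat + y.toNat + 2 := by omega
        obtain ⟨s, hs0, hsU, hws⟩ := L2 w hw U y hU0 hy hprod hlen
        refine ⟨s.toNat, by omega, ?_⟩
        rw [hf]
        simp only
        rw [Int.toNat_of_nonneg hs0, hws]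
      · rintro ⟨n, hn, rfl⟩
        have hprod : (f n).prod = el U y 0 := by
          rw [hfprod n, el_eq_iff]
          exact ⟨by omega, rfl, rfl⟩
        refine ⟨⟨W_isword _ _ _, ?_⟩, hprod⟩
        intro v hv hp
        rw [hprod] at hp
        have := lowerBound hv (by omega : y ≠ 0) hp
        rw [hflen n (by omega)]
        omega
    rw [hset, Set.ncard_coe_finset, Finset.card_image_of_injOn, Finset.card_range]
    intro n _ m _ h
    rw [hf] at h
    simp only [apow_natCast, List.append_assoc, List.singleton_append] at h
    exact lead_inj n m _ _ h

/-- For x₁, x₂ ≥ 0 and y > 0, the word a^{x₁} t a^y t a^{x₂} is geodesic,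
the word length of the element it represents, ((x₁+x₂, y), 0), is
x₁ + x₂ + y + 2, and there are exactly x₁ + x₂ + 1 distinct geodesic words
over A representing this element. -/
theorem bottom_layer_geodesics (x₁ x₂ y : ℤ) (h₁ : 0 ≤ x₁) (h₂ : 0 ≤ x₂) (hy : 0 < y) :
    (apow x₁ ++ [gt] ++ apow y ++ [gt] ++ apow x₂).prod = el (x₁ + x₂) y 0 ∧
    wordLength (el (x₁ + x₂) y 0) = (x₁ + x₂ + y).toNat + 2 ∧
    IsGeodesic (apow x₁ ++ [gt] ++ apow y ++ [gt] ++ apow x₂) ∧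
    {w : List GG | IsGeodesic w ∧ w.prod = el (x₁ + x₂) y 0}.ncard
      = (x₁ + x₂).toNat + 1 :=
  bottom_layer_geodesics' x₁ x₂ y h₁ h₂ hy
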